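/- Connection between conformal scores and DP cost: for reals y_1,...,y_m and any y_h, letting α_j(y_h) denote the CRPS of the empirical CDF of the augmented set {y_1,...,y_m,y_h} with the j-th element removed, evaluated at that j-th element (for j = 1,...,m+1, where the (m+1)-th element is y_h), the sum Σ_{j=1}^{m+1} α_j(y_h) equals ((m+1)/m²)·W', where W' is the sum of pairwise absolute differences over the augmented set. -/

import Mathlib

open Finset

/-- CRPS of the empirical CDF of the values `z i`, `i ∈ s`, evaluated at `y`
(the closed-form formula for empirical distributions). -/
noncomputable def empCRPS {ι : Type*} [DecidableEq ι] (s : Finset ι) (z : ι → ℝ) (y : ℝ) : ℝ :=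
  (1 / s.card) * ∑ i ∈ s, |z i - y|
    - (1 / (2 * (s.card : ℝ) ^ 2)) * ∑ i ∈ s, ∑ j ∈ s, |z i - z j|

/-- conformal scores sum to the DP cost: let `z` be the augmented sample
`(y 1, ..., y m, y_h)` and `α_j(y_h)` the CRPS of the empirical CDF of `z` with the
`j`-th element removed, evaluated at the `j`-th element. Then
`Σ_{j=1}^{m+1} α_j(y_h) = ((m+1)/m²)·W'`, where `W'` is the sum of pairwise absolute
differences over the augmented set. -/
theorem conformal_scores_sum_to_cost (m : ℕ) (hm : 1 ≤ m) (y : Fin m → ℝ) (yh : ℝ)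
    (z : Fin (m + 1) → ℝ) (hz : z = Fin.snoc y yh) (W' : ℝ)
    (hW' : W' = ∑ i, ∑ j ∈ univ.filter (fun j => i < j), |z i - z j|) :
    ∑ j, empCRPS (univ.erase j) z (z j)
      = ((m : ℝ) + 1) / (m : ℝ) ^ 2 * W' := by
  have hm0 : (m : ℝ) ≠ 0 := by positivity
  set S : ℝ := ∑ i, ∑ j, |z i - z j| with hSdef
  -- S = 2 * W'
  have hS2 : S = 2 * W' := by
    have hswap : ∀ i j : Fin (m+1), |z i - z j| = |z j - z i| := fun i j => abs_sub_comm _ _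
    have h1 : S = (∑ i, ∑ j ∈ univ.filter (fun j => i < j), |z i - z j|)
        + ∑ i, ∑ j ∈ univ.filter (fun j => j < i), |z i - z j| := by
      rw [hSdef, ← Finset.sum_add_distrib]
      refine Finset.sum_congr rfl (fun i _ => ?_)
      rw [← Finset.sum_filter_add_sum_filter_not univ (fun j => i < j)]
      congr 1
      have hins : (univ.filter fun j => ¬ i < j) = insert i (univ.filter fun j => j < i) := by
        ext j
        simp only [Finset.mem_filter, Finset.mem_univ, true_and, Finset.mem_insert, not_lt]
        constructor
        · intro h
          rcases lt_or_eq_of_le h with h | h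
          · exact Or.inr h
          · exact Or.inl h
        · rintro (rfl | h)
          · exact le_refl _
          · exact le_of_lt h
      rw [hins, Finset.sum_insert (by simp)]
      simp
    have h2 : ∑ i, ∑ j ∈ univ.filter (fun j => j < i), |z i - z j|
        = ∑ i, ∑ j ∈ univ.filter (fun j => i < j), |z i - z j| := by
      have e1 : ∀ i : Fin (m+1), ∑ j ∈ univ.filter (fun j => j < i), |z i - z j|
          = ∑ j, if j < i then |z i - z j| else 0 := fun i =>
        (Finset.sum_filter _ _)
      have e2 : ∀ i : Fin (m+1), ∑ j ∈ univ.filter (fun j => i < j), |z i - z j|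
          = ∑ j, if i < j then |z i - z j| else 0 := fun i =>
        (Finset.sum_filter _ _)
      simp only [e1, e2]
      rw [Finset.sum_comm]
      refine Finset.sum_congr rfl (fun i _ => Finset.sum_congr rfl (fun j _ => ?_))
      by_cases h : i < j <;> simp [h, hswap i j]
    rw [h1, h2, ← hW']; ring
  -- cardinality of erased universe
  have hcard : ∀ j : Fin (m+1), (((univ : Finset (Fin (m+1))).erase j).card : ℝ) = m := by
    intro j
    rw [Finset.card_erase_of_mem (Finset.mem_univ j), Finset.card_univ, Fintype.card_fin]
    simp
  -- first sum over erased set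
  have hrow : ∀ j : Fin (m+1), ∑ i ∈ univ.erase j, |z i - z j| = ∑ i, |z i - z j| := by
    intro j
    exact Finset.sum_erase _ (by simp)
  -- double sum over erased set
  have hinner : ∀ j : Fin (m+1), ∑ i ∈ univ.erase j, ∑ k ∈ univ.erase j, |z i - z k|
      = S - 2 * ∑ k, |z j - z k| := by
    intro j
    have h1 : ∀ i : Fin (m+1), ∑ k ∈ univ.erase j, |z i - z k|
        = (∑ k, |z i - z k|) - |z i - z j| := fun i =>
      Finset.sum_erase_eq_sub (Finset.mem_univ j)
    calc ∑ i ∈ univ.erase j, ∑ k ∈ univ.erase j, |z i - z k|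
        = ∑ i ∈ univ.erase j, ((∑ k, |z i - z k|) - |z i - z j|) :=
          Finset.sum_congr rfl (fun i _ => h1 i)
      _ = (∑ i ∈ univ.erase j, ∑ k, |z i - z k|) - ∑ i ∈ univ.erase j, |z i - z j| :=
          Finset.sum_sub_distrib _ _
      _ = ((∑ i, ∑ k, |z i - z k|) - ∑ k, |z j - z k|) - ∑ i, |z i - z j| := by
          rw [Finset.sum_erase_eq_sub (Finset.mem_univ j), hrow j]
      _ = S - 2 * ∑ k, |z j - z k| := by
          have h2 : ∑ i, |z i - z j| = ∑ k, |z j - z k| :=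
            Finset.sum_congr rfl (fun i _ => abs_sub_comm _ _)
          rw [h2, ← hSdef]; ring
  -- main computation
  have hmain : ∑ j, empCRPS (univ.erase j) z (z j)
      = ∑ j, ((1 / (m : ℝ)) * (∑ i, |z i - z j|)
          - (1 / (2 * (m : ℝ) ^ 2)) * (S - 2 * ∑ k, |z j - z k|)) := by
    refine Finset.sum_congr rfl (fun j _ => ?_)
    unfold empCRPS
    rw [hcard j, hrow j, hinner j]
  rw [hmain, Finset.sum_sub_distrib, ← Finset.mul_sum, ← Finset.mul_sum]
  have h3 : ∑ j, ∑ i, |z i - z j| = S := by rw [Finset.sum_comm, ← hSdef]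
  have h4 : ∑ j : Fin (m+1), (S - 2 * ∑ k, |z j - z k|) = ((m : ℝ) + 1) * S - 2 * S := by
    rw [Finset.sum_sub_distrib, Finset.sum_const, ← Finset.mul_sum, ← hSdef,
      Finset.card_univ, Fintype.card_fin]
    push_cast
    ring
  rw [h3, h4, hS2]
  field_simp
  ring
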